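/- Let G=(V,E) be a finite simple graph and f:V→ℝ injective. Then the Euler characteristic satisfies the symmetric Poincaré-Hopf formula χ(G) = Σ_{v∈V} (i_f(v)+i_{−f}(v))/2, and in particular χ(G) = Σ_{v∈V} i_f(v). -/

import Mathlib

open scoped Classical

/-- A finite simple graph: a finite vertex set together with a symmetric, irreflexive
adjacency relation supported on the vertex set. -/
structure FGraph (V : Type) where
  verts : Finset V
  Adj : V → V → Prop
  symm : ∀ {a b}, Adj a b → Adj b a
  loopless : ∀ a, ¬ Adj a a
  mem_of_adj : ∀ {a b}, Adj a b → a ∈ verts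

namespace FGraph

variable {V W : Type}

/-- The subgraph induced on the vertices satisfying `P`. -/
noncomputable def induce (G : FGraph V) (P : V → Prop) : FGraph V where
  verts := G.verts.filter P
  Adj a b := G.Adj a b ∧ P a ∧ P b
  symm h := ⟨G.symm h.1, h.2.2, h.2.1⟩
  loopless a h := G.loopless a h.1
  mem_of_adj h := Finset.mem_filter.mpr ⟨G.mem_of_adj h.1, h.2.1⟩

/-- The unit sphere of a vertex: the subgraph induced on its neighbors. -/
noncomputable def unitSphere (G : FGraph V) (v : V) : FGraph V :=
  G.induce (fun w => G.Adj v w)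

/-- The graph with the vertex `v` (and its edges) removed. -/
noncomputable def erase (G : FGraph V) (v : V) : FGraph V :=
  G.induce (fun w => w ≠ v)

/-- Inductive definition of contractibility: the one-point graph is contractible, and a
graph is contractible if some vertex has a contractible unit sphere and contractible
complement. -/
inductive Contractible : FGraph V → Prop
  | single (G : FGraph V) (v : V) (h : G.verts = {v}) : Contractible G
  | step (G : FGraph V) (v : V) (hv : v ∈ G.verts)
      (h1 : Contractible (G.unitSphere v)) (h2 : Contractible (G.erase v)) :
      Contractible G

mutual
  /-- `G` is a `d`-sphere: the empty graph is the `(-1)`-sphere, and a `d`-manifold is a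
  `d`-sphere if removing some vertex renders it contractible. -/
  inductive IsSphere : ℤ → FGraph V → Prop
    | empty (G : FGraph V) (h : G.verts = ∅) : IsSphere (-1) G
    | punctured (d : ℤ) (G : FGraph V) (hm : IsManifold d G) (v : V) (hv : v ∈ G.verts)
        (hc : Contractible (G.erase v)) : IsSphere d G
  /-- For `d ≥ 0`, `G` is a `d`-manifold iff every unit sphere is a `(d-1)`-sphere. -/
  inductive IsManifold : ℤ → FGraph V → Prop
    | intro (d : ℤ) (hd : 0 ≤ d) (G : FGraph V)
        (h : ∀ v ∈ G.verts, IsSphere (d - 1) (G.unitSphere v)) : IsManifold d G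
end

/-- A simplex of `G`: the vertex set of a complete subgraph. -/
def IsSimplex (G : FGraph V) (x : Finset V) : Prop :=
  x.Nonempty ∧ ↑x ⊆ G.verts ∧ ∀ a ∈ x, ∀ b ∈ x, a ≠ b → G.Adj a b

/-- The Barycentric refinement: vertices are the simplices of `G`, two being adjacent iff
one is strictly contained in the other. -/
noncomputable def barycentric (G : FGraph V) : FGraph (Finset V) where
  verts := G.verts.powerset.filter (fun x => G.IsSimplex x)
  Adj x y := G.IsSimplex x ∧ G.IsSimplex y ∧ (x ⊂ y ∨ y ⊂ x)
  symm h := ⟨h.2.1, h.1, h.2.2.symm⟩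
  loopless x h := by rcases h.2.2 with h' | h' <;> exact (ssubset_irrefl x h')
  mem_of_adj h := Finset.mem_filter.mpr ⟨Finset.mem_powerset.mpr h.1.2.1, h.1⟩

/-- Number of simplices of `G` with exactly `j` vertices (so `numSimplices G (k+1)` is
the `f`-vector entry `f_k(G)`). -/
noncomputable def numSimplices (G : FGraph V) (j : ℕ) : ℕ :=
  (G.verts.powerset.filter (fun x => G.IsSimplex x ∧ x.card = j)).card

/-- Euler characteristic `χ(G) = Σ_{k ≥ 0} (-1)^k f_k(G)`, where `f_k` counts the
simplices with `k+1` vertices. -/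
noncomputable def euler (G : FGraph V) : ℤ :=
  ∑ k ∈ Finset.range G.verts.card, (-1 : ℤ) ^ k * G.numSimplices (k + 1)

/-- The level set `{f = c}`: the subgraph of the Barycentric refinement induced by the
simplices on which `f - c` changes sign. -/
noncomputable def levelSet (G : FGraph V) (f : V → ℝ) (c : ℝ) : FGraph (Finset V) :=
  G.barycentric.induce (fun x => (∃ a ∈ x, f a - c < 0) ∧ (∃ b ∈ x, 0 < f b - c))

/-- Graph isomorphism. -/
def Iso (G : FGraph V) (H : FGraph W) : Prop :=
  ∃ φ : V → W, Set.BijOn φ ↑G.verts ↑H.verts ∧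
    ∀ a ∈ G.verts, ∀ b ∈ G.verts, (G.Adj a b ↔ H.Adj (φ a) (φ b))

/-- Zykov join of two graphs: disjoint union plus all edges between the two parts. -/
noncomputable def join (G : FGraph V) (H : FGraph W) : FGraph (V ⊕ W) where
  verts := G.verts.disjSum H.verts
  Adj a b :=
    match a, b with
    | .inl a, .inl b => G.Adj a b
    | .inr a, .inr b => H.Adj a b
    | .inl a, .inr b => a ∈ G.verts ∧ b ∈ H.verts
    | .inr a, .inl b => b ∈ G.verts ∧ a ∈ H.verts
  symm {a b} h := by
    cases a <;> cases b <;> simp_all <;> first | exact G.symm h | exact H.symm h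
  loopless a h := by
    cases a <;> simp_all <;> first | exact G.loopless _ h | exact H.loopless _ h
  mem_of_adj {a b} h := by
    cases a <;> cases b <;> simp_all [Finset.mem_disjSum] <;>
      first | exact G.mem_of_adj h | exact H.mem_of_adj h

/-- Union of two graphs on the same vertex type. -/
noncomputable def union (G H : FGraph V) : FGraph V where
  verts := G.verts ∪ H.verts
  Adj a b := G.Adj a b ∨ H.Adj a b
  symm h := h.imp G.symm H.symm
  loopless a h := h.elim (G.loopless a) (H.loopless a)
  mem_of_adj h :=
    h.elim (fun h' => Finset.mem_union_left _ (G.mem_of_adj h'))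
      (fun h' => Finset.mem_union_right _ (H.mem_of_adj h'))

/-- A `d`-ball: a graph of the form `S - v` for a `d`-sphere `S` and a vertex `v` of `S`
(up to graph isomorphism). -/
def IsBall (d : ℤ) (H : FGraph W) : Prop :=
  ∃ (S : FGraph ℕ) (v : ℕ), IsSphere d S ∧ v ∈ S.verts ∧ Iso H (S.erase v)

/-- A `d`-manifold with boundary: every unit sphere is a `(d-1)`-sphere or a `(d-1)`-ball. -/
def IsManifoldWithBoundary (d : ℤ) (G : FGraph V) : Prop :=
  ∀ v ∈ G.verts, IsSphere (d - 1) (G.unitSphere v) ∨ IsBall (d - 1) (G.unitSphere v)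

/-- The cyclic graph `C_n` on the vertex set `Fin n`. -/
def cycleGraph (n : ℕ) : FGraph (Fin n) where
  verts := Finset.univ
  Adj a b := a ≠ b ∧ ((a.val + 1) % n = b.val ∨ (b.val + 1) % n = a.val)
  symm h := ⟨h.1.symm, h.2.symm⟩
  loopless a h := h.1 rfl
  mem_of_adj _ := Finset.mem_univ _

/-- `G` is a disjoint union of cyclic graphs `C_n` with `n ≥ 4`: the vertex set splits
into pairwise disjoint pieces, edges never cross between pieces, and each piece induces
a graph isomorphic to a `C_n` with `n ≥ 4`. -/
def IsDisjointUnionOfCycles (G : FGraph V) : Prop :=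
  ∃ P : Finset (Finset V),
    (∀ S ∈ P, ↑S ⊆ G.verts) ∧
    (∀ S ∈ P, ∀ T ∈ P, S ≠ T → Disjoint S T) ∧
    (∀ v ∈ G.verts, ∃ S ∈ P, v ∈ S) ∧
    (∀ a b, G.Adj a b → ∀ S ∈ P, a ∈ S → b ∈ S) ∧
    (∀ S ∈ P, ∃ n, 4 ≤ n ∧ Iso (G.induce (· ∈ S)) (cycleGraph n))

/-- Poincaré–Hopf index `i_f(v) = 1 - χ(S^-_f(v))`. -/
noncomputable def pindex (G : FGraph V) (f : V → ℝ) (v : V) : ℤ :=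
  1 - ((G.unitSphere v).induce (fun w => f w < f v)).euler

/-- Curvature `K(v) = Σ_{k ≥ 0} (-1)^k f_{k-1}(S(v))/(k+1)` with `f_{-1} = 1`. -/
noncomputable def curvature (G : FGraph V) (v : V) : ℝ :=
  ∑ k ∈ Finset.range (G.verts.card + 1),
    (-1 : ℝ) ^ k * (if k = 0 then 1 else ((G.unitSphere v).numSimplices k : ℝ)) / (k + 1)

end FGraph

/-- `sign(a + i b) = sign(a) + i sign(b)`. -/
noncomputable def csgn (z : ℂ) : ℂ :=
  ⟨Real.sign z.re, Real.sign z.im⟩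

/-- The set `U = {1+i, 1-i, -1+i, -1-i}` of possible values of `csgn`. -/
noncomputable def signU : Finset ℂ :=
  {1 + Complex.I, 1 - Complex.I, -1 + Complex.I, -1 - Complex.I}

namespace FGraph

variable {V : Type}

/-- The set of values of `sign(ψ - c)` attained on the finite vertex set `x`. -/
noncomputable def signValues (ψ : V → ℂ) (c : ℂ) (x : Finset V) : Finset ℂ :=
  x.image (fun v => csgn (ψ v - c))

/-- The level set `{ψ = c}` of a complex-valued function: the subgraph of the Barycentric
refinement induced by the simplices on which `sign(ψ - c)` takes at least three distinct
values, including `-1+i` and `1-i`. -/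
noncomputable def complexLevelSet (G : FGraph V) (ψ : V → ℂ) (c : ℂ) : FGraph (Finset V) :=
  G.barycentric.induce (fun x =>
    3 ≤ (signValues ψ c x).card ∧
    (-1 + Complex.I) ∈ signValues ψ c x ∧ (1 - Complex.I) ∈ signValues ψ c x)

/-- The level set `{ψ = 0}_e` for a two-element subset `e ⊆ U`: the subgraph of the
Barycentric refinement induced by the simplices on which `sign(ψ)` attains both values
of `e` and at least three distinct values in total. -/
noncomputable def complexLevelSetE (G : FGraph V) (ψ : V → ℂ) (e : Finset ℂ) :
    FGraph (Finset V) :=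
  G.barycentric.induce (fun x =>
    (∀ u ∈ e, u ∈ signValues ψ 0 x) ∧ 3 ≤ (signValues ψ 0 x).card)

/-- `Ψ^{-1}(t)`: the subgraph of the Barycentric refinement induced by the simplices on
which `sign(ψ)` attains all values of `t`. -/
noncomputable def signPreimage (G : FGraph V) (ψ : V → ℂ) (t : Finset ℂ) :
    FGraph (Finset V) :=
  G.barycentric.induce (fun x => ∀ u ∈ t, u ∈ signValues ψ 0 x)

/-- The sign vectors of `F - c` attained on the finite vertex set `x`. -/
noncomputable def vecSignValues {k : ℕ} (F : V → Fin k → ℝ) (c : Fin k → ℝ)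
    (x : Finset V) : Finset (Fin k → ℝ) :=
  x.image (fun v j => Real.sign (F v j - c j))

/-- The level set `{F = c}` of an `ℝ^k`-valued function: the subgraph of the Barycentric
refinement induced by the simplices on which the sign vector of `F - c` takes at least
`k+1` distinct values, including the `k` vectors `(1,…,1,-1,1,…,1)`. -/
noncomputable def vecLevelSet (G : FGraph V) {k : ℕ} (F : V → Fin k → ℝ) (c : Fin k → ℝ) :
    FGraph (Finset V) :=
  G.barycentric.induce (fun x =>
    k + 1 ≤ (vecSignValues F c x).card ∧
    ∀ j : Fin k, (fun i => if i = j then (-1 : ℝ) else 1) ∈ vecSignValues F c x)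

end FGraph

/-- The complete graph on `Fin n`. -/
def completeFGraph (n : ℕ) : FGraph (Fin n) where
  verts := Finset.univ
  Adj a b := a ≠ b
  symm h := h.symm
  loopless a h := h rfl
  mem_of_adj _ := Finset.mem_univ _

/-- Stirling numbers of the second kind. -/
def stirling2 : ℕ → ℕ → ℕ
  | 0, 0 => 1
  | 0, _ + 1 => 0
  | _ + 1, 0 => 0
  | n + 1, m + 1 => (m + 1) * stirling2 n (m + 1) + stirling2 n m

namespace PH

variable {V : Type}

/-- The finset of simplices of `G`. -/
noncomputable def simps (G : FGraph V) : Finset (Finset V) :=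
  G.verts.powerset.filter (fun x => G.IsSimplex x)

lemma mem_simps {G : FGraph V} {x : Finset V} :
    x ∈ simps G ↔ G.IsSimplex x := by
  simp only [simps, Finset.mem_filter, Finset.mem_powerset]
  refine ⟨fun h => h.2, fun h => ⟨?_, h⟩⟩
  intro a ha
  exact h.2.1 ha

lemma card_bounds {G : FGraph V} {x : Finset V} (hx : x ∈ simps G) :
    1 ≤ x.card ∧ x.card ≤ G.verts.card := by
  rw [mem_simps] at hx
  constructor
  · exact Finset.card_pos.mpr hx.1
  · exact Finset.card_le_card (fun a ha => hx.2.1 ha)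

/-- Euler characteristic as a sum over simplices. -/
lemma euler_eq_sum (G : FGraph V) :
    G.euler = ∑ x ∈ simps G, (-1 : ℤ) ^ (x.card - 1) := by
  classical
  have hmaps : ∀ x ∈ simps G, x.card - 1 ∈ Finset.range G.verts.card := by
    intro x hx
    have := card_bounds hx
    rw [Finset.mem_range]; omega
  rw [← Finset.sum_fiberwise_of_maps_to hmaps (fun x => (-1 : ℤ) ^ (x.card - 1)),
    FGraph.euler]
  apply Finset.sum_congr rfl
  intro k hk
  have hset : (simps G).filter (fun x => x.card - 1 = k)
      = G.verts.powerset.filter (fun x => G.IsSimplex x ∧ x.card = k + 1) := by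
    ext x
    simp only [simps, Finset.mem_filter, Finset.mem_powerset]
    constructor
    · rintro ⟨⟨h1, h2⟩, h3⟩
      have : 1 ≤ x.card := Finset.card_pos.mpr h2.1
      exact ⟨h1, h2, by omega⟩
    · rintro ⟨h1, h2, h3⟩
      exact ⟨⟨h1, h2⟩, by omega⟩
  have hconst : ∑ x ∈ G.verts.powerset.filter (fun x => G.IsSimplex x ∧ x.card = k + 1),
      (-1 : ℤ) ^ (x.card - 1)
      = ∑ _x ∈ G.verts.powerset.filter (fun x => G.IsSimplex x ∧ x.card = k + 1), (-1 : ℤ) ^ k := by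
    apply Finset.sum_congr rfl
    intro x hx
    simp only [Finset.mem_filter] at hx
    rw [hx.2.2]
    norm_num
  rw [hset, hconst, Finset.sum_const, FGraph.numSimplices, nsmul_eq_mul]
  ring

/-- The Poincaré–Hopf index as a sum over simplices whose `f`-maximum is at `v`. -/
lemma pindex_eq_sum (G : FGraph V) (f : V → ℝ) (hf : Set.InjOn f ↑G.verts)
    {v : V} (hv : v ∈ G.verts) :
    G.pindex f v
      = ∑ x ∈ (simps G).filter (fun x => v ∈ x ∧ ∀ a ∈ x, f a ≤ f v),
          (-1 : ℤ) ^ (x.card - 1) := by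
  classical
  set H : FGraph V := (G.unitSphere v).induce (fun w => f w < f v) with hH
  have hHverts : ∀ w, w ∈ H.verts ↔ (w ∈ G.verts ∧ G.Adj v w) ∧ f w < f v := by
    intro w
    simp [hH, FGraph.induce, FGraph.unitSphere]
  have hHadj : ∀ a b, H.Adj a b ↔
      (G.Adj a b ∧ G.Adj v a ∧ G.Adj v b) ∧ f a < f v ∧ f b < f v := by
    intro a b
    simp [hH, FGraph.induce, FGraph.unitSphere]
    all_goals tauto
  set s : Finset (Finset V) :=
    (simps G).filter (fun x => v ∈ x ∧ ∀ a ∈ x, f a ≤ f v) with hs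
  have hvs : ({v} : Finset V) ∈ s := by
    rw [hs, Finset.mem_filter, mem_simps, FGraph.IsSimplex]
    refine ⟨⟨Finset.singleton_nonempty v, ?_, ?_⟩, Finset.mem_singleton_self v, ?_⟩
    · intro a ha
      rw [Finset.mem_singleton] at ha
      subst ha; exact hv
    · intro a ha b hb hab
      rw [Finset.mem_singleton] at ha hb
      exact absurd (ha.trans hb.symm) hab
    · intro a ha
      rw [Finset.mem_singleton] at ha
      subst ha; exact le_refl _
  rw [← Finset.add_sum_erase s _ hvs]
  have hbij : ∑ x ∈ s.erase {v}, (-1 : ℤ) ^ (x.card - 1)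
      = ∑ y ∈ simps H, -((-1 : ℤ) ^ (y.card - 1)) := by
    apply Finset.sum_nbij' (i := fun x => x.erase v) (j := fun y => insert v y)
    · -- maps to
      intro x hx
      simp only [Finset.mem_erase, hs, Finset.mem_filter, mem_simps] at hx
      obtain ⟨hne, hsimp, hvx, hmax⟩ := hx
      have hxsub : ∀ a ∈ x, a ∈ G.verts := fun a ha => hsimp.2.1 ha
      rw [mem_simps]
      have hmem : ∀ w ∈ x.erase v, w ∈ H.verts := by
        intro w hw
        rw [Finset.mem_erase] at hw
        obtain ⟨hwv, hwx⟩ := hw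
        rw [hHverts]
        have hwG : w ∈ G.verts := hxsub w hwx
        have hadj : G.Adj v w := hsimp.2.2 v hvx w hwx (Ne.symm hwv)
        have hlt : f w < f v :=
          lt_of_le_of_ne (hmax w hwx) (fun h => hwv (hf hwG hv h))
        exact ⟨⟨hwG, hadj⟩, hlt⟩
      refine ⟨?_, fun a ha => hmem a ha, ?_⟩
      · -- nonempty
        obtain ⟨w, hwx, hwv⟩ : ∃ w ∈ x, w ≠ v := by
          by_contra hcon
          push_neg at hcon
          apply hne
          ext a
          simp only [Finset.mem_singleton]
          exact ⟨fun ha => hcon a ha, fun ha => ha ▸ hvx⟩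
        exact ⟨w, Finset.mem_erase.mpr ⟨hwv, hwx⟩⟩
      · intro a ha b hb hab
        have ha' := hmem a ha
        have hb' := hmem b hb
        rw [hHverts] at ha' hb'
        rw [hHadj]
        exact ⟨⟨hsimp.2.2 a (Finset.mem_of_mem_erase ha) b (Finset.mem_of_mem_erase hb) hab,
          ha'.1.2, hb'.1.2⟩, ha'.2, hb'.2⟩
    · -- reverse maps to
      intro y hy
      rw [mem_simps] at hy
      have hysub : ∀ w ∈ y, (w ∈ G.verts ∧ G.Adj v w) ∧ f w < f v := by
        intro w hw
        rw [← hHverts]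
        exact hy.2.1 hw
      have hvny : v ∉ y := fun h => lt_irrefl (f v) (hysub v h).2
      rw [Finset.mem_erase, hs, Finset.mem_filter, mem_simps]
      refine ⟨?_, ⟨⟨v, Finset.mem_insert_self v y⟩, ?_, ?_⟩, Finset.mem_insert_self v y, ?_⟩
      · -- insert v y ≠ {v}
        obtain ⟨w, hw⟩ := hy.1
        intro hcon
        have : w ∈ ({v} : Finset V) := hcon ▸ Finset.mem_insert_of_mem hw
        rw [Finset.mem_singleton] at this
        exact hvny (this ▸ hw)
      · intro a ha
        rw [Finset.mem_insert] at ha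
        rcases ha with rfl | ha
        · exact hv
        · exact ((hysub a ha).1).1
      · intro a ha b hb hab
        rw [Finset.mem_insert] at ha hb
        rcases ha with rfl | ha
        · rcases hb with rfl | hb
          · exact absurd rfl hab
          · exact (hysub b hb).1.2
        · rcases hb with rfl | hb
          · exact G.symm (hysub a ha).1.2
          · have := hy.2.2 a ha b hb hab
            rw [hHadj] at this
            exact this.1.1
      · intro a ha
        rw [Finset.mem_insert] at ha
        rcases ha with rfl | ha
        · exact le_refl _
        · exact le_of_lt (hysub a ha).2
    · -- left inverse
      intro x hx
      simp only [Finset.mem_erase, hs, Finset.mem_filter] at hx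
      exact Finset.insert_erase hx.2.2.1
    · -- right inverse
      intro y hy
      rw [mem_simps] at hy
      have hvny : v ∉ y := by
        intro h
        have := hy.2.1 h
        rw [← Finset.mem_coe] at this
        have := (hHverts v).mp this
        exact lt_irrefl _ this.2
      exact Finset.erase_insert hvny
    · -- values
      intro x hx
      simp only [Finset.mem_erase, hs, Finset.mem_filter, mem_simps] at hx
      obtain ⟨hne, hsimp, hvx, hmax⟩ := hx
      have hcard2 : 2 ≤ x.card := by
        obtain ⟨w, hwx, hwv⟩ : ∃ w ∈ x, w ≠ v := by
          by_contra hcon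
          push_neg at hcon
          apply hne
          ext a
          simp only [Finset.mem_singleton]
          exact ⟨fun ha => hcon a ha, fun ha => ha ▸ hvx⟩
        exact Finset.one_lt_card.mpr ⟨v, hvx, w, hwx, Ne.symm hwv⟩
      rw [Finset.card_erase_of_mem hvx]
      have h1 : x.card - 1 = (x.card - 2) + 1 := by omega
      rw [h1, Nat.add_sub_cancel, pow_succ]
      ring
  rw [hbij, Finset.sum_neg_distrib, FGraph.pindex, ← hH, euler_eq_sum H]
  norm_num
  ring

/-- For each simplex, the `f`-maximizing vertex, with junk value `v0` on non-simplices. -/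
noncomputable def vmax (f : V → ℝ) (v0 : V) (x : Finset V) : V :=
  if h : ∃ w ∈ x, ∀ a ∈ x, f a ≤ f w then h.choose else v0

lemma vmax_spec {f : V → ℝ} {v0 : V} {x : Finset V} (hx : x.Nonempty) :
    vmax f v0 x ∈ x ∧ ∀ a ∈ x, f a ≤ f (vmax f v0 x) := by
  have h : ∃ w ∈ x, ∀ a ∈ x, f a ≤ f w := Finset.exists_max_image x f hx
  rw [vmax, dif_pos h]
  exact ⟨h.choose_spec.1, h.choose_spec.2⟩

/-- The main Poincaré–Hopf identity. -/
lemma euler_eq_sum_pindex (G : FGraph V) (f : V → ℝ) (hf : Set.InjOn f ↑G.verts) :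
    G.euler = ∑ v ∈ G.verts, G.pindex f v := by
  classical
  rcases G.verts.eq_empty_or_nonempty with hE | ⟨v0, hv0⟩
  · rw [FGraph.euler, hE]
    simp
  rw [euler_eq_sum]
  have hmaps : ∀ x ∈ simps G, vmax f v0 x ∈ G.verts := by
    intro x hx
    have hne : x.Nonempty := (mem_simps.mp hx).1
    exact (mem_simps.mp hx).2.1 (vmax_spec hne).1
  rw [← Finset.sum_fiberwise_of_maps_to hmaps (fun x => (-1 : ℤ) ^ (x.card - 1))]
  apply Finset.sum_congr rfl
  intro v hv
  rw [pindex_eq_sum G f hf hv]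
  apply Finset.sum_congr _ (fun _ _ => rfl)
  ext x
  simp only [Finset.mem_filter]
  constructor
  · rintro ⟨hx, hvx⟩
    have hne : x.Nonempty := (mem_simps.mp hx).1
    have := vmax_spec (f := f) (v0 := v0) hne
    exact ⟨hx, hvx ▸ this.1, hvx ▸ this.2⟩
  · rintro ⟨hx, hvx, hmax⟩
    have hne : x.Nonempty := (mem_simps.mp hx).1
    have hspec := vmax_spec (f := f) (v0 := v0) hne
    refine ⟨hx, ?_⟩
    have hsub : ∀ a ∈ x, a ∈ G.verts := fun a ha => (mem_simps.mp hx).2.1 ha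
    apply hf (hsub _ hspec.1) (hsub _ hvx)
    exact le_antisymm (hmax _ hspec.1) (hspec.2 _ hvx)

end PH

/-- Symmetric Poincaré–Hopf: for any finite simple graph `G` and injective
`f : V → ℝ`, `χ(G) = Σ_v (i_f(v) + i_{-f}(v))/2`, and in particular
`χ(G) = Σ_v i_f(v)`. -/


theorem poincare_hopf {V : Type} (G : FGraph V) (f : V → ℝ)
    (hf : Set.InjOn f ↑G.verts) :
    (G.euler : ℝ) =
        ∑ v ∈ G.verts, ((G.pindex f v + G.pindex (fun w => -f w) v : ℤ) : ℝ) / 2 ∧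
    G.euler = ∑ v ∈ G.verts, G.pindex f v := by
  have hf' : Set.InjOn (fun w => -f w) ↑G.verts := by
    intro a ha b hb h
    exact hf ha hb (neg_inj.mp h)
  have h1 := PH.euler_eq_sum_pindex G f hf
  have h2 := PH.euler_eq_sum_pindex G (fun w => -f w) hf'
  constructor
  · have key : ∑ v ∈ G.verts, ((G.pindex f v + G.pindex (fun w => -f w) v : ℤ) : ℝ) / 2
        = ((∑ v ∈ G.verts, G.pindex f v : ℤ) : ℝ) / 2
          + ((∑ v ∈ G.verts, G.pindex (fun w => -f w) v : ℤ) : ℝ) / 2 := by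
      push_cast
      rw [← add_div, ← Finset.sum_add_distrib, Finset.sum_div]
    rw [key, ← h1, ← h2]
    ring
  · exact h1
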